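/- arXiv:2005.08939 — 7 statements merged into one kernel-verified Lean document; each statement's English description precedes it below -/
import Mathlib

section
/- For integers p ≥ 2 and q with gcd(p,q)=1, every term of the sequence g_n = p^{2n} * binom(n + q/p, n) (generalized binomial coefficient with rational upper argument) is an integer. -/
open Finset

/-- There is a `k₀ ∈ [1, m]` with `m ∣ p * k₀ + q`, when `p` is coprime to `m`. -/
private lemma exists_root (p q : ℤ) {m : ℕ} (hm : 0 < m) (hco : IsCoprime p (m : ℤ)) :
    ∃ k₀ : ℕ, 1 ≤ k₀ ∧ k₀ ≤ m ∧ (m : ℤ) ∣ p * k₀ + q := by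
  obtain ⟨u, v, huv⟩ := hco
  set z : ℤ := (-q * u) % m with hzdef
  have hm' : (0 : ℤ) < m := by exact_mod_cast hm
  have hz0 : 0 ≤ z := Int.emod_nonneg _ hm'.ne'
  have hzm : z < m := Int.emod_lt_of_pos _ hm'
  have h1 : (m : ℤ) ∣ (-q * u) - z := Int.dvd_self_sub_of_emod_eq rfl
  have h2 : (m : ℤ) ∣ p * (-q * u) + q := ⟨q * v, by linear_combination (-q) * huv⟩
  have hdz : (m : ℤ) ∣ p * z + q := by
    have h3 := dvd_sub h2 (h1.mul_left p)
    have : p * (-q * u) + q - p * ((-q * u) - z) = p * z + q := by ring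
    rwa [this] at h3
  by_cases hz : z = 0
  · refine ⟨m, hm, le_refl _, ?_⟩
    have : p * (m : ℤ) + q = (p * z + q) + p * ((m : ℤ) - z) := by rw [hz]; ring
    rw [this]
    exact dvd_add hdz ((dvd_sub (dvd_refl _) (hz ▸ dvd_zero _)).mul_left p)
  · have hz0' : 0 < z := lt_of_le_of_ne hz0 (Ne.symm hz)
    refine ⟨z.toNat, ?_, ?_, ?_⟩
    · omega
    · omega
    · rwa [Int.toNat_of_nonneg hz0]

/-- At least `n / m` of the numbers `p * k + q`, `k ∈ [1, n]`, are divisible by `m`. -/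
private lemma div_le_card (p q : ℤ) (n : ℕ) {m : ℕ} (hm : 0 < m) (hco : IsCoprime p (m : ℤ)) :
    n / m ≤ #({k ∈ Icc 1 n | (m : ℤ) ∣ p * (k : ℤ) + q} : Finset ℕ) := by
  obtain ⟨k₀, hk1, hkm, hdvd⟩ := exists_root p q hm hco
  have hmem : ∀ t ∈ range (n / m),
      k₀ + t * m ∈ ({k ∈ Icc 1 n | (m : ℤ) ∣ p * (k : ℤ) + q} : Finset ℕ) := by
    intro t ht
    rw [mem_range] at ht
    refine mem_filter.mpr ⟨mem_Icc.mpr ⟨by omega, ?_⟩, ?_⟩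
    · have h1 : k₀ + t * m ≤ (t + 1) * m := by
        have := hkm; nlinarith
      have h2 : (t + 1) * m ≤ (n / m) * m := Nat.mul_le_mul_right _ (by omega)
      have h3 : (n / m) * m ≤ n := Nat.div_mul_le_self n m
      omega
    · have : p * ((k₀ : ℤ) + t * m) + q = (p * k₀ + q) + (p * t) * m := by ring
      rw [Nat.cast_add, Nat.cast_mul, this]
      exact dvd_add hdvd ⟨p * t, by ring⟩
  refine le_trans (le_of_eq (card_range (n / m)).symm) (card_le_card_of_injOn _ hmem ?_)
  intro a _ b _ hab
  simp only at hab
  exact Nat.eq_of_mul_eq_mul_right hm (by omega)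

/-- For primes `ℓ` not dividing `p`, the `ℓ`-valuation of `n!` is at most that of
`∏_{k=1}^n (p k + q)`. -/
private lemma fact_val_le (p q : ℤ) (n : ℕ) {ℓ : ℕ} (hℓ : ℓ.Prime) (hℓp : ¬(ℓ : ℤ) ∣ p)
    (hA : ∀ k : ℕ, k ∈ Icc 1 n → p * k + q ≠ 0) :
    (n.factorial).factorization ℓ ≤ ∑ k ∈ Icc 1 n, ((p * k + q).natAbs).factorization ℓ := by
  haveI : Fact ℓ.Prime := ⟨hℓ⟩
  have hℓZ : Prime (ℓ : ℤ) := Nat.prime_iff_prime_int.1 hℓ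
  have hcop : IsCoprime p (ℓ : ℤ) := (hℓZ.coprime_iff_not_dvd.mpr hℓp).symm
  rw [Nat.factorization_def _ hℓ, padicValNat_factorial (Nat.lt_succ_self _)]
  set B := Nat.log ℓ n + 1 with hB
  calc ∑ j ∈ Ico 1 B, n / ℓ ^ j
      ≤ ∑ j ∈ Ico 1 B, #({k ∈ Icc 1 n | ((ℓ ^ j : ℕ) : ℤ) ∣ p * (k : ℤ) + q} : Finset ℕ) := by
        refine sum_le_sum fun j _ => ?_
        have hco' : IsCoprime p ((ℓ ^ j : ℕ) : ℤ) := by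
          push_cast; exact hcop.pow_right
        exact div_le_card p q n (pow_pos hℓ.pos j) hco'
    _ = ∑ k ∈ Icc 1 n, #({j ∈ Ico 1 B | ((ℓ ^ j : ℕ) : ℤ) ∣ p * (k : ℤ) + q} : Finset ℕ) := by
        simp_rw [Finset.card_filter]
        rw [Finset.sum_comm]
    _ ≤ ∑ k ∈ Icc 1 n, ((p * k + q).natAbs).factorization ℓ := by
        refine sum_le_sum fun k hk => ?_
        have hk0 : ((p * k + q).natAbs) ≠ 0 := fun h => hA k hk (Int.natAbs_eq_zero.mp h)
        have hsub : {j ∈ Ico 1 B | ((ℓ ^ j : ℕ) : ℤ) ∣ p * k + q}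
            ⊆ Icc 1 (((p * k + q).natAbs).factorization ℓ) := by
          intro j hj
          rw [mem_filter, mem_Ico] at hj
          refine mem_Icc.mpr ⟨hj.1.1, ?_⟩
          have : ℓ ^ j ∣ (p * k + q).natAbs := Int.natCast_dvd.mp hj.2
          exact (Nat.Prime.pow_dvd_iff_le_factorization hℓ hk0).mp this
        calc #({j ∈ Ico 1 B | ((ℓ ^ j : ℕ) : ℤ) ∣ p * (k : ℤ) + q} : Finset ℕ)
            ≤ #(Icc 1 (((p * k + q).natAbs).factorization ℓ)) := card_le_card hsub
          _ = ((p * k + q).natAbs).factorization ℓ := by rw [Nat.card_Icc]; omega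

/-- The key divisibility: `n! ∣ p^n * ∏_{k=1}^n (p k + q)`. -/
private lemma key_dvd (p q : ℤ) (hp : 2 ≤ p) (hpq : IsCoprime p q) (n : ℕ) :
    (n.factorial : ℤ) ∣ p ^ n * ∏ k ∈ Icc 1 n, (p * k + q) := by
  have hpunit : ¬IsUnit p := by
    rw [Int.isUnit_iff]; omega
  have hA : ∀ k : ℕ, k ∈ Icc 1 n → p * k + q ≠ 0 := by
    intro k hk h
    have : p ∣ q := ⟨-k, by linarith⟩
    exact hpunit (hpq.isUnit_of_dvd' dvd_rfl this)
  have hprod0 : (∏ k ∈ Icc 1 n, (p * (k : ℤ) + q)) ≠ 0 := Finset.prod_ne_zero_iff.mpr hA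
  have hp0 : p ≠ 0 := by omega
  rw [Int.natCast_dvd]
  have hnat : (p ^ n * ∏ k ∈ Icc 1 n, (p * k + q)).natAbs
      = p.natAbs ^ n * ∏ k ∈ Icc 1 n, (p * (k : ℤ) + q).natAbs := by
    rw [Int.natAbs_mul, Int.natAbs_pow]
    congr 1
    exact map_prod Int.natAbsHom _ _
  rw [hnat]
  have hrhs0 : p.natAbs ^ n * ∏ k ∈ Icc 1 n, (p * (k : ℤ) + q).natAbs ≠ 0 := by
    refine Nat.mul_ne_zero (pow_ne_zero _ ?_) ?_
    · simpa using hp0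
    · rw [Finset.prod_ne_zero_iff]
      intro k hk
      simpa [Int.natAbs_eq_zero] using hA k hk
  rw [← Nat.factorization_le_iff_dvd n.factorial_ne_zero hrhs0]
  intro ℓ
  by_cases hℓ : ℓ.Prime
  · haveI : Fact ℓ.Prime := ⟨hℓ⟩
    have hfacts : (p.natAbs ^ n * ∏ k ∈ Icc 1 n, (p * (k : ℤ) + q).natAbs).factorization ℓ
        = n * p.natAbs.factorization ℓ
          + ∑ k ∈ Icc 1 n, ((p * k + q).natAbs).factorization ℓ := by
      rw [Nat.factorization_mul (pow_ne_zero _ (by simpa using hp0))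
        (by rw [Finset.prod_ne_zero_iff]; intro k hk; simpa [Int.natAbs_eq_zero] using hA k hk),
        Nat.factorization_pow,
        Nat.factorization_prod (fun k hk => by simpa [Int.natAbs_eq_zero] using hA k hk)]
      simp [Finset.sum_apply']
    rw [hfacts]
    by_cases hdvd : ℓ ∣ p.natAbs
    · have h1 : (n.factorial).factorization ℓ ≤ n := by
        rw [Nat.factorization_def _ hℓ, padicValNat_factorial (Nat.lt_succ_self _)]
        exact le_trans (Nat.geom_sum_Ico_le hℓ.two_le _ _) (Nat.div_le_self _ _)
      have h2 : 1 ≤ p.natAbs.factorization ℓ :=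
        hℓ.factorization_pos_of_dvd (by simpa using hp0) hdvd
      calc (n.factorial).factorization ℓ ≤ n := h1
        _ ≤ n * p.natAbs.factorization ℓ := by nlinarith
        _ ≤ _ := Nat.le_add_right _ _
    · have hℓp : ¬(ℓ : ℤ) ∣ p := by
        rw [Int.natCast_dvd]; exact hdvd
      exact le_trans (fact_val_le p q n hℓ hℓp hA) (Nat.le_add_left _ _)
  · simp [Nat.factorization_eq_zero_of_not_prime _ hℓ]

/-- Generalized binomial coefficient `x(x-1)⋯(x-n+1)/n!` for rational `x`. -/
noncomputable def gchoose (x : ℚ) (n : ℕ) : ℚ :=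
  (∏ i ∈ Finset.range n, (x - i)) / (n.factorial : ℚ)

/-- Every term of `g_n = p^{2n} * binom(n + q/p, n)` is an integer. -/
theorem catbert_g_integer (p q : ℤ) (hp : 2 ≤ p) (hpq : Int.gcd p q = 1) (n : ℕ) :
    ∃ m : ℤ, (p : ℚ) ^ (2 * n) * gchoose ((n : ℚ) + (q : ℚ) / (p : ℚ)) n = (m : ℚ) := by
  have hco : IsCoprime p q := Int.isCoprime_iff_gcd_eq_one.mpr hpq
  obtain ⟨m, hm⟩ := key_dvd p q hp hco n
  refine ⟨m, ?_⟩
  have hp0 : (p : ℚ) ≠ 0 := by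
    have : p ≠ 0 := by omega
    exact_mod_cast this
  have hfac0 : ((n.factorial : ℤ) : ℚ) ≠ 0 := by
    exact_mod_cast n.factorial_ne_zero
  -- rewrite the product
  have hprod : (p : ℚ) ^ n * ∏ i ∈ Finset.range n, (((n : ℚ) + (q : ℚ) / (p : ℚ)) - i)
      = ((∏ k ∈ Icc 1 n, (p * (k : ℤ) + q) : ℤ) : ℚ) := by
    have hpn : (p : ℚ) ^ n = ∏ _i ∈ Finset.range n, (p : ℚ) := by simp
    rw [hpn, ← Finset.prod_mul_distrib]
    have hterm : ∀ i ∈ Finset.range n,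
        (p : ℚ) * (((n : ℚ) + (q : ℚ) / (p : ℚ)) - i)
          = ((p * ((n : ℤ) - (i : ℤ)) + q : ℤ) : ℚ) := by
      intro i _
      push_cast
      field_simp
      ring
    rw [Finset.prod_congr rfl hterm]
    rw [Int.cast_prod]
    -- reindex : i ∈ range n ↦ k = n - i ∈ Icc 1 n
    rw [show (Icc 1 n) = Finset.Ico 1 (n + 1) by rw [Finset.Ico_add_one_right_eq_Icc],
      Finset.prod_Ico_eq_prod_range]
    simp only [Nat.add_sub_cancel]
    rw [← Finset.prod_range_reflect (fun j => ((p * ((1 + j : ℕ) : ℤ) + q : ℤ) : ℚ)) n]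
    refine Finset.prod_congr rfl fun i hi => ?_
    rw [Finset.mem_range] at hi
    congr 1
    push_cast [Nat.cast_sub (show i ≤ n - 1 from by omega), Nat.cast_sub (show 1 ≤ n from by omega)]
    ring
  have hfacQ : (n.factorial : ℚ) ≠ 0 := by exact_mod_cast n.factorial_ne_zero
  rw [gchoose, two_mul, pow_add]
  calc (p : ℚ) ^ n * (p : ℚ) ^ n
      * ((∏ i ∈ Finset.range n, (((n : ℚ) + (q : ℚ) / (p : ℚ)) - i)) / (n.factorial : ℚ))
      = (p : ℚ) ^ n * ((p : ℚ) ^ n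
          * ∏ i ∈ Finset.range n, (((n : ℚ) + (q : ℚ) / (p : ℚ)) - i)) / (n.factorial : ℚ) := by
        ring
    _ = (p : ℚ) ^ n * ((∏ k ∈ Icc 1 n, (p * (k : ℤ) + q) : ℤ) : ℚ) / (n.factorial : ℚ) := by
        rw [hprod]
    _ = ((p ^ n * ∏ k ∈ Icc 1 n, (p * (k : ℤ) + q) : ℤ) : ℚ) / (n.factorial : ℚ) := by
        push_cast; ring
    _ = (((n.factorial : ℤ) * m : ℤ) : ℚ) / (n.factorial : ℚ) := by rw [hm]
    _ = (m : ℚ) := by push_cast; field_simp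
end

section
/- Let G_{i,j} = 1/g_{i+j+a} where g_n = p^{2n} binom(n+q/p, n), and L_{n,k} = (-1)^{n+k} p^{2k} binom(n+k+a+q/p-1, k) binom(n+a, k+a). Then for every n ≥ 1, the sum over k from 0 to n of L_{n,k} G_{k,n-1} equals 0. -/
/-- The generalized Catalan numbers `g_n = p^{2n} binom(n + q/p, n)`. -/
noncomputable def gcat (p q : ℤ) (n : ℕ) : ℚ :=
  (p : ℚ) ^ (2 * n) * gchoose ((n : ℚ) + (q : ℚ) / (p : ℚ)) n

/-- The Hankel matrix entries `G_{i,j} = 1/g_{i+j+a}`. -/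
noncomputable def Gmat (p q : ℤ) (a i j : ℕ) : ℚ :=
  1 / gcat p q (i + j + a)

/-- `L_{n,k} = (-1)^{n+k} p^{2k} binom(n+k+a+q/p-1, k) binom(n+a, k+a)`. -/
noncomputable def Lmat (p q : ℤ) (a n k : ℕ) : ℚ :=
  (-1 : ℚ) ^ (n + k) * (p : ℚ) ^ (2 * k)
    * gchoose ((n : ℚ) + (k : ℚ) + (a : ℚ) + (q : ℚ) / (p : ℚ) - 1) k
    * gchoose ((n : ℚ) + (a : ℚ)) (k + a)

open Polynomial Finset in
lemma alt_sum (s a : ℕ) :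
    ∑ k ∈ Finset.range (s + 2), (-1 : ℚ) ^ k * ((s + 1).choose k) * ((k + s + a).choose s) = 0 := by
  have e : (-X : ℚ[X]) ^ (s + 1)
      = ∑ k ∈ Finset.range (s + 2), (-(X + 1)) ^ k * 1 ^ (s + 1 - k) * ((s + 1).choose k : ℚ[X]) := by
    calc (-X : ℚ[X]) ^ (s + 1) = (-(X + 1) + 1) ^ (s + 1) := by ring
    _ = _ := add_pow _ _ _
  have h1 : ∑ k ∈ Finset.range (s + 2),
      (Polynomial.C ((-1 : ℚ) ^ k * ((s + 1).choose k))) * (X + 1) ^ (k + s + a)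
      = (X + 1) ^ (s + a) * (-X) ^ (s + 1) := by
    rw [e, Finset.mul_sum]
    apply Finset.sum_congr rfl
    intro k hk
    simp only [map_mul, map_pow, map_neg, map_one, map_natCast, one_pow, neg_pow ((X : ℚ[X]) + 1)]
    push_cast
    ring
  have h2 := congrArg (fun P => Polynomial.coeff P s) h1
  simp only [Polynomial.finset_sum_coeff, Polynomial.coeff_C_mul,
    Polynomial.coeff_X_add_one_pow] at h2
  have h3 : ((X + 1 : ℚ[X]) ^ (s + a) * (-X) ^ (s + 1)).coeff s = 0 := by
    have : ((X + 1 : ℚ[X]) ^ (s + a) * (-X) ^ (s + 1))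
        = ((-1) ^ (s + 1) * (X + 1) ^ (s + a)) * X ^ (s + 1) := by ring
    rw [this, Polynomial.coeff_mul_X_pow']
    simp
  rw [h3] at h2
  exact h2

lemma key_nat (s a k : ℕ) (hk : k ≤ s + 1) :
    (((s + 1 + a).choose (k + a) : ℚ)) * ((k + s + a).factorial) * ((s + 1).factorial)
      = ((s + 1 + a).factorial) * (s.factorial) * ((s + 1).choose k)
        * ((k + s + a).choose s) * (k.factorial) := by
  have h1 : ((s + 1 + a).choose (k + a) : ℚ) =
      ((s + 1 + a).factorial : ℚ) / ((k + a).factorial * ((s + 1 - k).factorial)) := by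
    rw [Nat.cast_choose ℚ (by omega), show s + 1 + a - (k + a) = s + 1 - k from by omega]
  have h2 : (((s + 1).choose k : ℚ)) =
      ((s + 1).factorial : ℚ) / (k.factorial * ((s + 1 - k).factorial)) :=
    Nat.cast_choose ℚ hk
  have h3 : (((k + s + a).choose s : ℚ)) =
      ((k + s + a).factorial : ℚ) / (s.factorial * ((k + a).factorial)) := by
    rw [Nat.cast_choose ℚ (by omega), show k + s + a - s = k + a from by omega]
  rw [h1, h2, h3]
  have f1 : ((k + a).factorial : ℚ) ≠ 0 := by exact_mod_cast (k+a).factorial_ne_zero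
  have f2 : (((s + 1 - k)).factorial : ℚ) ≠ 0 := by exact_mod_cast (s+1-k).factorial_ne_zero
  have f3 : (k.factorial : ℚ) ≠ 0 := by exact_mod_cast k.factorial_ne_zero
  have f4 : (s.factorial : ℚ) ≠ 0 := by exact_mod_cast s.factorial_ne_zero
  field_simp


lemma gchoose_natCast (N K : ℕ) : gchoose (N : ℚ) K = N.choose K := by
  unfold gchoose
  rcases le_or_gt K N with h | h
  · have : ∏ i ∈ Finset.range K, ((N : ℚ) - i) = (N.descFactorial K : ℚ) := by
      rw [Nat.descFactorial_eq_prod_range, Nat.cast_prod]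
      apply Finset.prod_congr rfl
      intro i hi
      have : i ≤ N := le_trans (le_of_lt (Finset.mem_range.mp hi)) h
      push_cast [this]; ring
    rw [this, Nat.descFactorial_eq_factorial_mul_choose]
    push_cast
    rw [mul_comm]
    field_simp
  · have hz : ∏ i ∈ Finset.range K, ((N : ℚ) - i) = 0 := by
      apply Finset.prod_eq_zero (Finset.mem_range.mpr h)
      simp
    rw [hz, Nat.choose_eq_zero_of_lt h]
    simp

lemma gchoose_add (x : ℚ) (k m : ℕ) :
    gchoose x (k + m) = gchoose x k * (∏ j ∈ Finset.range m, (x - k - j)) *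
      (k.factorial : ℚ) / ((k + m).factorial : ℚ) := by
  unfold gchoose
  rw [Finset.prod_range_add]
  have hk : (k.factorial : ℚ) ≠ 0 := by exact_mod_cast k.factorial_ne_zero
  field_simp
  ring_nf
  congr 1
  apply Finset.prod_congr rfl
  intro j _
  push_cast; ring


theorem catbert_orthogonal_one (p q : ℤ) (a : ℕ) (hp : 2 ≤ p) (hq : Int.gcd p q = 1)
    (hg : ∀ m : ℕ, gcat p q m ≠ 0) (n : ℕ) (hn : 1 ≤ n) :
    ∑ k ∈ Finset.range (n + 1), Lmat p q a n k * Gmat p q a k (n - 1) = 0 := by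
  obtain ⟨s, rfl⟩ : ∃ s, n = s + 1 := ⟨n - 1, by omega⟩
  have hs1 : s + 1 - 1 = s := by omega
  rw [hs1]
  set r : ℚ := (q : ℚ) / (p : ℚ) with hr
  have hp0 : (p : ℚ) ≠ 0 := by
    have : (0 : ℤ) < p := by omega
    exact_mod_cast this.ne'
  set Cst : ℚ := ∏ j ∈ Finset.range (s + a), ((s : ℚ) + (a : ℚ) + r - j) with hCst
  set D : ℚ := (-1 : ℚ) ^ (s + 1) * ((s + 1 + a).factorial : ℚ) * (s.factorial : ℚ) /
      ((p : ℚ) ^ (2 * (s + a)) * Cst * ((s + 1).factorial : ℚ)) with hD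
  have main : ∀ k ∈ Finset.range (s + 2),
      Lmat p q a (s + 1) k * Gmat p q a k s
        = D * ((-1 : ℚ) ^ k * ((s + 1).choose k) * ((k + s + a).choose s)) := by
    intro k hk
    have hkle : k ≤ s + 1 := by simpa [Nat.lt_succ_iff] using Finset.mem_range.mp hk
    set x : ℚ := (k : ℚ) + (s : ℚ) + (a : ℚ) + r with hx
    -- rewrite the split
    have hsplit : gchoose x (k + s + a)
        = gchoose x k * Cst * (k.factorial : ℚ) / ((k + s + a).factorial : ℚ) := by
      have h0 : k + s + a = k + (s + a) := by omega
      have hprod : ∏ j ∈ Finset.range (s + a), (x - (k : ℚ) - j) = Cst := by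
        rw [hCst]
        apply Finset.prod_congr rfl
        intro j _
        rw [hx]; ring
      rw [h0, gchoose_add x k (s + a), hprod]
    have hG : gchoose x (k + s + a) ≠ 0 := by
      have := hg (k + s + a)
      rw [gcat] at this
      have harg : ((k + s + a : ℕ) : ℚ) + r = x := by push_cast [hx]; ring
      rw [harg] at this
      exact fun h => this (by rw [h, mul_zero])
    have hgk : gchoose x k ≠ 0 := by
      intro h; exact hG (by rw [hsplit, h]; ring)
    have hC : Cst ≠ 0 := by
      intro h; exact hG (by rw [hsplit, h]; ring)
    have hfk : (k.factorial : ℚ) ≠ 0 := by exact_mod_cast k.factorial_ne_zero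
    have hfks : ((k + s + a).factorial : ℚ) ≠ 0 := by exact_mod_cast (k + s + a).factorial_ne_zero
    have hfs : (s.factorial : ℚ) ≠ 0 := by exact_mod_cast s.factorial_ne_zero
    have hfs1 : ((s + 1).factorial : ℚ) ≠ 0 := by exact_mod_cast (s + 1).factorial_ne_zero
    have harg1 : ((s + 1 : ℕ) : ℚ) + (k : ℚ) + (a : ℚ) + r - 1 = x := by push_cast [hx]; ring
    have harg2 : ((s + 1 : ℕ) : ℚ) + (a : ℚ) = ((s + 1 + a : ℕ) : ℚ) := by push_cast; ring
    have harg3 : ((k + s + a : ℕ) : ℚ) + r = x := by push_cast [hx]; ring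
    rw [Lmat, Gmat, gcat, harg1, harg2, harg3, gchoose_natCast, hsplit, hD]
    have key := key_nat s a k hkle
    field_simp
    linear_combination ((-1 : ℚ) ^ (s + 1 + k) * (p : ℚ) ^ (2 * k) *
      (p : ℚ) ^ (2 * (s + a))) * key
  rw [Finset.sum_congr rfl main, ← Finset.mul_sum, alt_sum, mul_zero]
end

section
/- Let G_{i,j} = 1/g_{i+j+a} with g_n = p^{2n} binom(n+q/p, n), and L_{n,k} = (-1)^{n+k} p^{2k} binom(n+k+a+q/p-1, k) binom(n+a, k+a). Then for every n ≥ 2, the sum over k from 0 to n of L_{n,k} G_{k,n-2} equals 0. -/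
set_option maxHeartbeats 2000000

open Finset

/-! ### Auxiliary binomial-coefficient lemmas -/

lemma catbert_auxA (b k : ℕ) :
    ((k:ℚ)+1) * ((b+k+2).choose (k+1)) = ((b:ℚ)+k+2) * ((b+k+1).choose k) := by
  have h' : (b+k+2) * (b+k+1).choose k = (b+k+2).choose (k+1) * (k+1) := by
    simpa [Nat.succ_eq_add_one] using Nat.add_one_mul_choose_eq (b+k+1) k
  have hq : ((b:ℚ)+k+2) * ((b+k+1).choose k) = ((b+k+2).choose (k+1)) * ((k:ℚ)+1) := by
    exact_mod_cast congrArg (Nat.cast : ℕ → ℚ) h'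
  linear_combination -hq

lemma catbert_auxB (M j : ℕ) :
    ((j:ℚ)+1) * (M.choose (j+1)) = ((M:ℚ) - j) * (M.choose j) := by
  rcases lt_or_ge j M with h | h
  · have h' := Nat.choose_succ_right_eq M j
    have hq : (M.choose (j+1) : ℚ) * ((j:ℚ)+1) = (M.choose j : ℚ) * ((M - j : ℕ) : ℚ) := by
      exact_mod_cast congrArg (Nat.cast : ℕ → ℚ) h'
    rw [Nat.cast_sub h.le] at hq
    linear_combination hq
  · rcases eq_or_lt_of_le h with rfl | h2
    · simp [Nat.choose_succ_self]
    · rw [Nat.choose_eq_zero_of_lt (by omega), Nat.choose_eq_zero_of_lt (by omega)]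
      simp

/-- Telescoping certificate for the first alternating binomial sum. -/
noncomputable def catbert_fW (b a k : ℕ) : ℚ :=
  (-1:ℚ)^(k+1) * k * ((k:ℚ)+a) * ((b+k+1).choose k) * ((b+2).choose (k+a))

lemma catbert_stepW (b a k : ℕ) :
    ((b:ℚ)+2) * ((b:ℚ)+2-a) * ((-1:ℚ)^k * ((b+k+1).choose k) * ((b+2).choose (k+a)))
      = catbert_fW b a (k+1) - catbert_fW b a k := by
  have h1 : catbert_fW b a (k+1)
      = (-1:ℚ)^(k+2) * ((k:ℚ)+1) * ((k:ℚ)+1+a) * ((b+k+2).choose (k+1)) * ((b+2).choose (k+a+1)) := by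
    unfold catbert_fW
    have e1 : b+(k+1)+1 = b+k+2 := by ring
    have e2 : k+1+a = k+a+1 := by ring
    rw [e1, e2]
    push_cast
    ring
  rw [h1]
  unfold catbert_fW
  have hA := catbert_auxA b k
  have hB := catbert_auxB (b+2) (k+a)
  push_cast at hB
  linear_combination (-(-1:ℚ)^k * ((k:ℚ)+a+1) * ((b+2).choose (k+a+1))) * hA
    + (-(-1:ℚ)^k * ((b:ℚ)+k+2) * ((b+k+1).choose k)) * hB

lemma catbert_lemW (b a N : ℕ) (ha : a ≤ b+1) (hN : b+2 < N+a) :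
    ∑ k ∈ range N, (-1:ℚ)^k * ((b+k+1).choose k) * ((b+2).choose (k+a)) = 0 := by
  have key : ((b:ℚ)+2) * ((b:ℚ)+2-a)
      * ∑ k ∈ range N, (-1:ℚ)^k * ((b+k+1).choose k) * ((b+2).choose (k+a))
      = catbert_fW b a N - catbert_fW b a 0 := by
    rw [Finset.mul_sum, ← Finset.sum_range_sub (catbert_fW b a)]
    exact Finset.sum_congr rfl fun k _ => catbert_stepW b a k
  have h0 : catbert_fW b a 0 = 0 := by simp [catbert_fW]
  have hN' : catbert_fW b a N = 0 := by
    have hc : (b+2).choose (N+a) = 0 := Nat.choose_eq_zero_of_lt (by omega)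
    simp [catbert_fW, hc]
  rw [h0, hN', sub_zero] at key
  have hb2 : ((b:ℚ)+2) ≠ 0 := by positivity
  have hba : ((b:ℚ)+2-a) ≠ 0 := by
    have : (a:ℚ) ≤ (b:ℚ)+1 := by exact_mod_cast ha
    intro hcon; nlinarith
  rcases mul_eq_zero.mp key with h | h
  · rcases mul_eq_zero.mp h with h' | h'
    · exact absurd h' hb2
    · exact absurd h' hba
  · exact h

lemma catbert_lemV (b a N : ℕ) (ha : a ≤ b) (hN : b+2 < N+a+1) :
    ∑ k ∈ range (N+1), (-1:ℚ)^k * ((b+k).choose k) * ((b+2).choose (k+a)) = 0 := by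
  have hsplit : ∑ k ∈ range (N+1), (-1:ℚ)^k * ((b+k).choose k) * ((b+2).choose (k+a))
      = (∑ k ∈ range (N+1), (-1:ℚ)^k * ((b+k+1).choose k) * ((b+2).choose (k+a)))
        - ∑ k ∈ range (N+1), (-1:ℚ)^k
            * (((b+k+1).choose k : ℚ) - ((b+k).choose k : ℚ)) * ((b+2).choose (k+a)) := by
    rw [← Finset.sum_sub_distrib]
    exact Finset.sum_congr rfl fun k _ => by ring
  rw [hsplit]
  have h1 : ∑ k ∈ range (N+1), (-1:ℚ)^k * ((b+k+1).choose k) * ((b+2).choose (k+a)) = 0 :=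
    catbert_lemW b a (N+1) (by omega) (by omega)
  have h2 : ∑ k ∈ range (N+1), (-1:ℚ)^k
      * (((b+k+1).choose k : ℚ) - ((b+k).choose k : ℚ)) * ((b+2).choose (k+a)) = 0 := by
    rw [Finset.sum_range_succ']
    have hz : (-1:ℚ)^0 * (((b+0+1).choose 0 : ℚ) - ((b+0).choose 0 : ℚ)) * ((b+2).choose (0+a)) = 0 := by
      simp
    rw [hz, add_zero]
    have hcongr : ∀ j ∈ range N, (-1:ℚ)^(j+1)
        * (((b+(j+1)+1).choose (j+1) : ℚ) - ((b+(j+1)).choose (j+1) : ℚ)) * ((b+2).choose ((j+1)+a))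
        = -((-1:ℚ)^j * ((b+j+1).choose j : ℚ) * ((b+2).choose (j+(a+1)))) := by
      intro j _
      have hp : (b+j+2).choose (j+1) = (b+j+1).choose j + (b+j+1).choose (j+1) :=
        Nat.choose_succ_succ (b+j+1) j
      have e1 : b+(j+1)+1 = b+j+2 := by ring
      have e2 : b+(j+1) = b+j+1 := by ring
      have e3 : (j+1)+a = j+(a+1) := by ring
      rw [e1, e2, e3, hp]
      push_cast
      ring
    rw [Finset.sum_congr rfl hcongr, Finset.sum_neg_distrib]
    rw [catbert_lemW b (a+1) N (by omega) (by omega)]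
    simp
  rw [h1, h2, sub_zero]

/-! ### Product and gchoose lemmas -/

lemma catbert_prod_reflect (y : ℚ) (k : ℕ) :
    ∏ i ∈ range k, (y - i) = ∏ i ∈ range k, (y - (k:ℚ) + 1 + i) := by
  cases k with
  | zero => simp
  | succ k' =>
    rw [← Finset.prod_range_reflect (fun i => y - (k'+1:ℕ) + 1 + i) (k'+1)]
    apply Finset.prod_congr rfl
    intro j hj
    have hj' : j ≤ k' := by simpa [Nat.lt_succ_iff] using hj
    have : ((k' + 1 - 1 - j : ℕ) : ℚ) = (k' : ℚ) - j := by
      have : k' + 1 - 1 - j = k' - j := by omega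
      rw [this, Nat.cast_sub hj']
    rw [this]
    push_cast
    ring

lemma catbert_gchoose_nat (N j : ℕ) (h : j ≤ N) : gchoose (N:ℚ) j = (N.choose j : ℚ) := by
  unfold gchoose
  have hnum : ∏ i ∈ range j, ((N:ℚ) - i) = (N.descFactorial j : ℚ) := by
    rw [Nat.descFactorial_eq_prod_range, Nat.cast_prod]
    apply Finset.prod_congr rfl
    intro i hi
    have : i ≤ N := le_trans (le_of_lt (Finset.mem_range.mp hi)) h
    rw [Nat.cast_sub this]
  rw [hnum, Nat.descFactorial_eq_factorial_mul_choose]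
  push_cast
  rw [mul_comm, mul_div_assoc, div_self (by exact_mod_cast (Nat.factorial_ne_zero j)), mul_one]

/-! ### Main theorem -/

theorem catbert_orthogonal_two (p q : ℤ) (a : ℕ) (hp : 2 ≤ p) (hq : Int.gcd p q = 1)
    (hg : ∀ m : ℕ, gcat p q m ≠ 0) (n : ℕ) (hn : 2 ≤ n) :
    ∑ k ∈ Finset.range (n + 1), Lmat p q a n k * Gmat p q a k (n - 2) = 0 := by
  obtain ⟨m, rfl⟩ : ∃ m, n = m + 2 := ⟨n - 2, by omega⟩
  set x : ℚ := (q:ℚ) / (p:ℚ) with hxdef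
  set b := m + a with hbdef
  have hp0 : (p:ℚ) ≠ 0 := by
    have : p ≠ 0 := by omega
    exact_mod_cast this
  have hPfact : ∀ M : ℕ, ∏ i ∈ range M, (x + i + 1)
      = gchoose ((M:ℚ) + x) M * (M.factorial : ℚ) := by
    intro M
    unfold gchoose
    rw [div_mul_cancel₀ _ (by exact_mod_cast Nat.factorial_ne_zero M : (M.factorial : ℚ) ≠ 0)]
    rw [catbert_prod_reflect ((M:ℚ)+x) M]
    apply Finset.prod_congr rfl
    intro i _
    ring
  have hPne : ∀ M : ℕ, (∏ i ∈ range M, (x + i + 1)) ≠ 0 := by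
    intro M
    rw [hPfact M]
    apply mul_ne_zero
    · intro h
      exact hg M (by unfold gcat; rw [← hxdef, h, mul_zero])
    · exact_mod_cast Nat.factorial_ne_zero M
  have hg2' : ∀ k : ℕ, k ≤ m+2 → gchoose ((↑(m+2) : ℚ) + ↑a) (k+a) = (((b+2).choose (k+a) : ℕ) : ℚ) := by
    intro k hk
    have e : ((m+2:ℕ):ℚ) + (a:ℚ) = ((b+2:ℕ):ℚ) := by push_cast [hbdef]; ring
    rw [e, catbert_gchoose_nat (b+2) (k+a) (by omega)]
  have hg1' : ∀ k : ℕ, gchoose ((↑(m+2):ℚ) + ↑k + ↑a + x - 1) k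
      = (∏ i ∈ range k, (x + (b:ℚ) + 2 + i)) / (k.factorial : ℚ) := by
    intro k
    unfold gchoose
    congr 1
    rw [catbert_prod_reflect]
    apply Finset.prod_congr rfl
    intro i _
    push_cast [hbdef]
    ring
  have hg3' : ∀ k : ℕ, gcat p q (b+k)
      = (p:ℚ)^(2*(b+k)) * ((∏ i ∈ range (b+k), (x+↑i+1)) / (((b+k).factorial : ℕ) : ℚ)) := by
    intro k
    unfold gcat
    rw [← hxdef]
    congr 1
    rw [eq_div_iff (by exact_mod_cast Nat.factorial_ne_zero (b+k) : (((b+k).factorial : ℕ) : ℚ) ≠ 0)]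
    exact (hPfact (b+k)).symm
  have hPP : ∀ k : ℕ, (∏ i ∈ range (b+1), (x+↑i+1)) * (∏ i ∈ range k, (x + (b:ℚ) + 2 + ↑i))
      = (∏ i ∈ range (b+k), (x+↑i+1)) * (x + (b:ℚ) + (k:ℚ) + 1) := by
    intro k
    have h1 := Finset.prod_range_add (fun i => (x + (i:ℚ) + 1)) (b+1) k
    have h2 := Finset.prod_range_succ (fun i => (x + (i:ℚ) + 1)) (b+k)
    rw [show b+1+k = b+k+1 from by omega, h2] at h1
    rw [show (∏ i ∈ range k, (x + ((b+1+i:ℕ):ℚ) + 1)) = ∏ i ∈ range k, (x + (b:ℚ)+2+↑i) from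
      Finset.prod_congr rfl (fun i _ => by push_cast; ring)] at h1
    rw [← h1]
    push_cast
    ring
  have hfact : ∀ k : ℕ, (((b+k).choose k : ℕ) : ℚ) * (k.factorial : ℚ) * (b.factorial : ℚ)
      = ((b+k).factorial : ℚ) := by
    intro k
    have h := Nat.choose_mul_factorial_mul_factorial (show k ≤ b+k by omega)
    rw [show b+k-k = b from by omega] at h
    exact_mod_cast h
  have hterm : ∀ k ∈ range (m+2+1), Lmat p q a (m+2) k * Gmat p q a k (m+2-2)
      = (((-1:ℚ)^(m+2) * (b.factorial : ℚ)) / ((p:ℚ)^(2*b) * ∏ i ∈ range (b+1), (x + ↑i + 1)))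
        * ((-1:ℚ)^k * (((b+k).choose k : ℕ):ℚ) * (((b+2).choose (k+a) : ℕ):ℚ) * (x + (b:ℚ) + ↑k + 1)) := by
    intro k hk
    have hk' : k ≤ m+2 := by simpa [Nat.lt_succ_iff] using hk
    unfold Lmat Gmat
    rw [← hxdef]
    rw [show k + (m+2-2) + a = b + k from by omega]
    rw [hg1' k, hg2' k hk', hg3' k]
    have hPk : (∏ i ∈ range k, (x + (b:ℚ) + 2 + ↑i))
        = (∏ i ∈ range (b+k), (x+↑i+1)) * (x + (b:ℚ) + (k:ℚ) + 1) / (∏ i ∈ range (b+1), (x+↑i+1)) := by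
      rw [eq_div_iff (hPne (b+1))]
      linear_combination hPP k
    have hch : (((b+k).choose k : ℕ) : ℚ)
        = ((b+k).factorial : ℚ) / ((k.factorial : ℚ) * (b.factorial : ℚ)) := by
      rw [eq_div_iff (by positivity)]
      linear_combination hfact k
    rw [hPk, hch]
    have hf1 : (k.factorial : ℚ) ≠ 0 := by exact_mod_cast Nat.factorial_ne_zero k
    have hf2 : ((b+k).factorial : ℚ) ≠ 0 := by exact_mod_cast Nat.factorial_ne_zero (b+k)
    have hf3 : (b.factorial : ℚ) ≠ 0 := by exact_mod_cast Nat.factorial_ne_zero b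
    field_simp [hPne (b+1), hPne (b+k), hp0]
    ring
  rw [Finset.sum_congr rfl hterm]
  set E : ℚ := ((-1:ℚ)^(m+2) * (b.factorial : ℚ)) / ((p:ℚ)^(2*b) * ∏ i ∈ range (b+1), (x + ↑i + 1)) with hEdef
  have hsplit2 : ∀ k ∈ range (m+2+1),
      E * ((-1:ℚ)^k * (((b+k).choose k : ℕ):ℚ) * (((b+2).choose (k+a) : ℕ):ℚ) * (x + (b:ℚ) + ↑k + 1))
      = E * x * ((-1:ℚ)^k * (((b+k).choose k : ℕ):ℚ) * (((b+2).choose (k+a) : ℕ):ℚ))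
        + E * ((b:ℚ)+1) * ((-1:ℚ)^k * (((b+k+1).choose k : ℕ):ℚ) * (((b+2).choose (k+a) : ℕ):ℚ)) := by
    intro k _
    have h1 : (b+k).choose k = (b+k).choose b := by
      have := Nat.choose_symm (show b ≤ b+k by omega)
      rwa [show b+k-b = k from by omega] at this
    have h2 : (b+k+1).choose k = (b+k+1).choose (b+1) := by
      have := Nat.choose_symm (show k ≤ b+k+1 by omega)
      rw [show b+k+1-k = b+1 from by omega] at this
      exact this.symm
    have h3 := Nat.add_one_mul_choose_eq (b+k) b
    have h3' : ((b:ℚ)+k+1) * ((b+k).choose b : ℕ) = ((b+k+1).choose (b+1) : ℕ) * ((b:ℚ)+1) := by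
      exact_mod_cast congrArg (Nat.cast : ℕ → ℚ) h3
    have hbk : ((b:ℚ)+k+1) * (((b+k).choose k : ℕ):ℚ) = ((b:ℚ)+1) * (((b+k+1).choose k : ℕ):ℚ) := by
      rw [h1, h2]
      linear_combination h3'
    linear_combination E * ((-1:ℚ)^k) * ((((b+2).choose (k+a) : ℕ)):ℚ) * hbk
  rw [Finset.sum_congr rfl hsplit2, Finset.sum_add_distrib, ← Finset.mul_sum, ← Finset.mul_sum]
  rw [catbert_lemV b a (m+2) (by omega) (by omega)]
  rw [catbert_lemW b a (m+2+1) (by omega) (by omega)]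
  ring
end

section
/- Let q be a prime, p an integer with gcd(q,p)=1, n an integer with p²n + pq ≡ 0 (mod q), and k a positive integer with k not ≡ 0 (mod q). Then p^{2k} binom(n + q/p, k) is an integer divisible by q. -/
open Finset

private lemma ascFactorial_prod (n k : ℕ) : n.ascFactorial k = ∏ i ∈ range k, (n + i) := by
  induction k with
  | zero => simp
  | succ m ih => rw [Finset.prod_range_succ, ← ih, Nat.ascFactorial_succ, mul_comm]

private lemma key_nat' (Q b k : ℕ) (hQ : Q.Prime) (hb : Q ∣ b) (hk : 0 < k) (hkQ : ¬ Q ∣ k) :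
    Q ∣ b.choose k := by
  rcases Nat.eq_zero_or_pos b with rfl | hb0
  · rw [Nat.choose_eq_zero_of_lt hk]
    exact dvd_zero _
  obtain ⟨b', rfl⟩ : ∃ b', b = b' + 1 := ⟨b - 1, by omega⟩
  obtain ⟨k', rfl⟩ : ∃ k', k = k' + 1 := ⟨k - 1, by omega⟩
  have h := Nat.add_one_mul_choose_eq b' k'
  have h2 : Q ∣ (b' + 1).choose (k' + 1) * (k' + 1) := by
    rw [← h]
    exact hb.mul_right _
  rcases (Nat.Prime.dvd_mul hQ).mp h2 with h3 | h3
  · exact h3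
  · exact absurd h3 hkQ

private lemma key_nat_s10 (Q b k : ℕ) (hQ : Q.Prime) (hb : Q ∣ b) (hk : 0 < k) (hkQ : ¬ Q ∣ k) :
    Q ∣ (b + k - 1).choose k := by
  rcases Nat.eq_zero_or_pos b with rfl | hb0
  · rw [Nat.zero_add, Nat.choose_eq_zero_of_lt (by omega)]
    exact dvd_zero _
  obtain ⟨b', rfl⟩ : ∃ b', b = b' + 1 := ⟨b - 1, by omega⟩
  have e : b' + 1 + k - 1 = b' + k := by omega
  rw [e]
  have h := Nat.add_one_mul_choose_eq (b' + k) b'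
  have hsym : (b' + k).choose b' = (b' + k).choose k := by
    have h4 := Nat.choose_symm (show b' ≤ b' + k by omega)
    have e4 : b' + k - b' = k := by omega
    rw [e4] at h4
    exact h4.symm
  have h2 : Q ∣ (b' + k + 1).choose (b' + 1) * (b' + 1) := hb.mul_left _
  rw [← h, hsym] at h2
  rcases (Nat.Prime.dvd_mul hQ).mp h2 with h3 | h3
  · exfalso
    have hd : Q ∣ b' + k + 1 := h3
    have h5 := Nat.dvd_sub hd hb
    have e5 : b' + k + 1 - (b' + 1) = k := by omega
    rw [e5] at h5
    exact hkQ h5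
  · exact h3

/-- Key lemma: if `q ∣ a`, `q ∤ k`, `k > 0` then `q·k! ∣ a(a-1)⋯(a-k+1)`. -/
private lemma key_int (q a : ℤ) (hq : Prime q) (ha : q ∣ a) (k : ℕ) (hk : 0 < k)
    (hkq : ¬ q ∣ (k : ℤ)) : q * (k.factorial : ℤ) ∣ ∏ i ∈ range k, (a - i) := by
  have hQ : q.natAbs.Prime := Int.prime_iff_natAbs_prime.mp hq
  have hkQ : ¬ q.natAbs ∣ k := by
    intro h
    exact hkq (Int.natAbs_dvd.mp (Int.natCast_dvd_natCast.mpr h))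
  have habs : ∀ C : ℕ, q.natAbs ∣ C → q ∣ (C : ℤ) := fun C hC =>
    Int.natAbs_dvd.mp (Int.natCast_dvd_natCast.mpr hC)
  rcases le_or_gt 0 a with hpos | hneg
  · obtain ⟨b, rfl⟩ := Int.eq_ofNat_of_zero_le hpos
    have hbQ : q.natAbs ∣ b := by
      have := Int.natAbs_dvd_natAbs.mpr ha
      simpa using this
    rcases lt_or_ge b k with hbk | hbk
    · rw [Finset.prod_eq_zero (mem_range.mpr hbk) (by simp : ((b : ℤ) - (b : ℕ)) = 0)]
      exact dvd_zero _
    · have hcast : ∏ i ∈ range k, ((b : ℤ) - i) = ((b.descFactorial k : ℕ) : ℤ) := by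
        rw [Nat.descFactorial_eq_prod_range, Nat.cast_prod]
        refine Finset.prod_congr rfl fun i hi => ?_
        have hik := mem_range.mp hi
        rw [Nat.cast_sub (by omega)]
      obtain ⟨c, hc⟩ := habs _ (key_nat' _ _ _ hQ hbQ hk hkQ)
      rw [hcast, Nat.descFactorial_eq_factorial_mul_choose]
      exact ⟨c, by push_cast [hc]; ring⟩
  · set b : ℕ := (-a).toNat with hbdef
    have hab : a = -(b : ℤ) := by simp [hbdef]; omega
    have hbQ : q.natAbs ∣ b := by
      have h1 : q ∣ (b : ℤ) := dvd_neg.mp (hab ▸ ha)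
      have := Int.natAbs_dvd_natAbs.mpr h1
      simpa using this
    have hcast : ∏ i ∈ range k, (a - i) = (-1) ^ k * ((b.ascFactorial k : ℕ) : ℤ) := by
      calc ∏ i ∈ range k, (a - i) = ∏ i ∈ range k, (-1 : ℤ) * ((b : ℤ) + i) := by
            refine Finset.prod_congr rfl fun i hi => ?_
            rw [hab]; ring
        _ = (-1) ^ k * ∏ i ∈ range k, ((b : ℤ) + i) := by
            rw [Finset.prod_mul_distrib, Finset.prod_const, Finset.card_range]
        _ = (-1) ^ k * ((b.ascFactorial k : ℕ) : ℤ) := by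
            rw [ascFactorial_prod]; push_cast; ring
    obtain ⟨c, hc⟩ := habs _ (key_nat_s10 _ _ _ hQ hbQ hk hkQ)
    rw [hcast, Nat.ascFactorial_eq_factorial_mul_choose']
    exact ⟨(-1) ^ k * c, by push_cast [hc]; ring⟩

private lemma prod_modeq (M : ℤ) (f g : ℕ → ℤ) (k : ℕ) (h : ∀ i ∈ range k, f i ≡ g i [ZMOD M]) :
    (∏ i ∈ range k, f i) ≡ (∏ i ∈ range k, g i) [ZMOD M] := by
  induction k with
  | zero => simp
  | succ m ih =>
      rw [Finset.prod_range_succ, Finset.prod_range_succ]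
      exact (ih fun i hi => h i (mem_range.mpr ((mem_range.mp hi).trans (Nat.lt_succ_self m)))).mul
        (h m (mem_range.mpr (Nat.lt_succ_self m)))

private lemma main_dvd (q p N : ℤ) (hq : Prime q) (hqp : Int.gcd q p = 1) (hN : q ∣ N)
    (k : ℕ) (hk : 0 < k) (hkq : ¬ q ∣ (k : ℤ)) :
    q * (k.factorial : ℤ) ∣ p ^ k * ∏ i ∈ range k, (N - p * i) := by
  by_cases hz : ∏ i ∈ range k, (N - p * i) = 0
  · rw [hz, mul_zero]
    exact dvd_zero _
  have hp0 : p ≠ 0 := by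
    rintro rfl
    have h1 : q.natAbs = 1 := by simpa [Int.gcd] using hqp
    exact absurd h1 (Int.prime_iff_natAbs_prime.mp hq).one_lt.ne'
  set s : ℤ := p ^ k * ∏ i ∈ range k, (N - p * i) with hs
  have hs0 : s ≠ 0 := mul_ne_zero (pow_ne_zero _ hp0) hz
  set Q : ℕ := q.natAbs with hQdef
  have hQ : Q.Prime := Int.prime_iff_natAbs_prime.mp hq
  have habs : (q * (k.factorial : ℤ)).natAbs = Q * k.factorial := by
    rw [Int.natAbs_mul]
    simp [hQdef]
  rw [← Int.natAbs_dvd_natAbs, habs]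
  have hd0 : Q * k.factorial ≠ 0 := mul_ne_zero hQ.pos.ne' (Nat.factorial_ne_zero k)
  have hn0 : s.natAbs ≠ 0 := Int.natAbs_ne_zero.mpr hs0
  rw [← Nat.factorization_le_iff_dvd hd0 hn0, Finsupp.le_def]
  intro ℓ
  by_cases hℓ : ℓ.Prime
  swap
  · simp [Nat.factorization_eq_zero_of_not_prime _ hℓ]
  set e := (Q * k.factorial).factorization ℓ with he
  rw [← Nat.Prime.pow_dvd_iff_le_factorization hℓ hn0]
  suffices hsuff : (ℓ : ℤ) ^ e ∣ s by
    have h9 := Int.natAbs_dvd_natAbs.mpr hsuff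
    simpa [Int.natAbs_pow] using h9
  by_cases hℓp : (ℓ : ℤ) ∣ p
  · have hℓQ : ¬ ℓ ∣ Q := by
      intro hd
      have h1 : ℓ ∣ p.natAbs := by
        have := Int.natAbs_dvd_natAbs.mpr hℓp
        simpa using this
      have h2 : ℓ ∣ Int.gcd q p := Nat.dvd_gcd hd h1
      rw [hqp] at h2
      exact absurd (Nat.dvd_one.mp h2) hℓ.one_lt.ne'
    have heq : e = (k.factorial).factorization ℓ := by
      rw [he, Nat.factorization_mul hQ.pos.ne' (Nat.factorial_ne_zero k)]
      simp [Nat.factorization_eq_zero_of_not_dvd hℓQ]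
    have hle : e ≤ k := by
      haveI : Fact ℓ.Prime := ⟨hℓ⟩
      rw [heq, Nat.factorization_def _ hℓ]
      have h2 := sub_one_mul_padicValNat_factorial (p := ℓ) k
      have h3 : 1 ≤ ℓ - 1 := by have := hℓ.two_le; omega
      calc padicValNat ℓ k.factorial ≤ (ℓ - 1) * padicValNat ℓ k.factorial :=
            Nat.le_mul_of_pos_left _ (by omega)
        _ = k - (ℓ.digits k).sum := h2
        _ ≤ k := Nat.sub_le _ _
    calc (ℓ : ℤ) ^ e ∣ (ℓ : ℤ) ^ k := pow_dvd_pow _ hle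
      _ ∣ p ^ k := pow_dvd_pow_of_dvd hℓp k
      _ ∣ s := Dvd.intro _ rfl
  · have hℓZ : Prime (ℓ : ℤ) := Nat.prime_iff_prime_int.mp hℓ
    have hcop : IsCoprime p ((ℓ : ℤ) ^ e) :=
      (((hℓZ.coprime_iff_not_dvd).mpr hℓp).symm).pow_right
    obtain ⟨t, c, htc⟩ := hcop
    have hmod : ∀ i ∈ range k, t * (N - p * i) ≡ t * N - i [ZMOD (ℓ : ℤ) ^ e] := by
      intro i _
      rw [Int.modEq_iff_dvd]
      exact ⟨-(i * c), by linear_combination (i : ℤ) * htc⟩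
    have hcongr := prod_modeq ((ℓ : ℤ) ^ e) _ _ k hmod
    have hkey := key_int q (t * N) hq (hN.mul_left t) k hk hkq
    have hdvd1 : (ℓ : ℤ) ^ e ∣ ∏ i ∈ range k, (t * N - i) := by
      have hord : (ℓ ^ e : ℕ) ∣ Q * k.factorial := Nat.ordProj_dvd _ _
      have h5 : ((Q * k.factorial : ℕ) : ℤ) ∣ ∏ i ∈ range k, (t * N - i) := by
        rw [← habs, Int.natAbs_dvd]
        exact hkey
      calc (ℓ : ℤ) ^ e = ((ℓ ^ e : ℕ) : ℤ) := by push_cast; ring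
        _ ∣ ((Q * k.factorial : ℕ) : ℤ) := Int.natCast_dvd_natCast.mpr hord
        _ ∣ _ := h5
    have hdvd2 : (ℓ : ℤ) ^ e ∣ t ^ k * ∏ i ∈ range k, (N - p * i) := by
      have h6 : (∏ i ∈ range k, (t * (N - p * i))) ≡ 0 [ZMOD (ℓ : ℤ) ^ e] :=
        hcongr.trans ((Int.modEq_zero_iff_dvd).mpr hdvd1)
      have h7 : ∏ i ∈ range k, (t * (N - p * i)) = t ^ k * ∏ i ∈ range k, (N - p * i) := by
        rw [Finset.prod_mul_distrib, Finset.prod_const, Finset.card_range]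
      rw [← h7]
      exact (Int.modEq_zero_iff_dvd).mp h6
    have hcop2 : IsCoprime ((ℓ : ℤ) ^ e) (t ^ k) :=
      (IsCoprime.symm ⟨p, c, by linear_combination htc⟩ : IsCoprime ((ℓ:ℤ)^e) t).pow_right
    have hdvd3 : (ℓ : ℤ) ^ e ∣ ∏ i ∈ range k, (N - p * i) :=
      hcop2.dvd_of_dvd_mul_left hdvd2
    exact hdvd3.trans (dvd_mul_left _ _)

/-- If `q` is prime, `gcd(q,p)=1`, `q ∣ p²n + pq`, and `q ∤ k > 0`, then
`p^{2k} binom(n + q/p, k)` is an integer divisible by `q`. -/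
theorem lucas_variant_one (q p n : ℤ) (hq : Prime q) (hqp : Int.gcd q p = 1)
    (hn : q ∣ p ^ 2 * n + p * q) (k : ℕ) (hk : 0 < k) (hkq : ¬ (q : ℤ) ∣ (k : ℤ)) :
    ∃ m : ℤ, (p : ℚ) ^ (2 * k) * gchoose ((n : ℚ) + (q : ℚ) / (p : ℚ)) k = (m : ℚ)
      ∧ q ∣ m := by
  have hp0 : p ≠ 0 := by
    rintro rfl
    have h1 : q.natAbs = 1 := by simpa [Int.gcd] using hqp
    exact absurd h1 (Int.prime_iff_natAbs_prime.mp hq).one_lt.ne'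
  have hqdp : ¬ q ∣ p := by
    intro hd
    have h1 : q.natAbs ∣ Int.gcd q p := Nat.dvd_gcd dvd_rfl (Int.natAbs_dvd_natAbs.mpr hd)
    rw [hqp] at h1
    exact absurd (Nat.dvd_one.mp h1) (Int.prime_iff_natAbs_prime.mp hq).one_lt.ne'
  have hN : q ∣ p * n + q := by
    have h1 : q ∣ p * (p * n + q) := by
      have h2 : p * (p * n + q) = p ^ 2 * n + p * q := by ring
      rw [h2]
      exact hn
    rcases hq.dvd_mul.mp h1 with h3 | h3
    · exact absurd h3 hqdp
    · exact h3
  obtain ⟨c, hc⟩ := main_dvd q p (p * n + q) hq hqp hN k hk hkq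
  refine ⟨q * c, ?_, Dvd.intro c rfl⟩
  have hpQ : (p : ℚ) ≠ 0 := Int.cast_ne_zero.mpr hp0
  have hfac : (k.factorial : ℚ) ≠ 0 := Nat.cast_ne_zero.mpr (Nat.factorial_ne_zero k)
  rw [gchoose]
  have hval : (p : ℚ) ^ (2 * k) * ∏ i ∈ range k, (((n : ℚ) + (q : ℚ) / (p : ℚ)) - i)
      = ((q * (k.factorial : ℤ) * c : ℤ) : ℚ) := by
    calc (p : ℚ) ^ (2 * k) * ∏ i ∈ range k, (((n : ℚ) + (q : ℚ) / (p : ℚ)) - i)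
        = ∏ i ∈ range k, ((p : ℚ) ^ 2 * (((n : ℚ) + (q : ℚ) / (p : ℚ)) - i)) := by
          rw [Finset.prod_mul_distrib, Finset.prod_const, Finset.card_range, ← pow_mul]
      _ = ∏ i ∈ range k, (((p * ((p * n + q) - p * i) : ℤ) : ℚ)) := by
          refine Finset.prod_congr rfl fun i _ => ?_
          push_cast
          field_simp
      _ = ((∏ i ∈ range k, (p * ((p * n + q) - p * i)) : ℤ) : ℚ) := by
          rw [Int.cast_prod]
      _ = ((p ^ k * ∏ i ∈ range k, ((p * n + q) - p * i) : ℤ) : ℚ) := by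
          rw [Finset.prod_mul_distrib, Finset.prod_const, Finset.card_range]
      _ = ((q * (k.factorial : ℤ) * c : ℤ) : ℚ) := by rw [hc]
  rw [mul_div_assoc', hval]
  push_cast
  field_simp
end

section
/- For any integers n and k with n ≡ 2 (mod 3), k ≡ 2 (mod 3), k > 0, the integer 4^k binom(n + k - 3/2, k) is divisible by 3. -/
/-- Integer generalized binomial coefficient. -/
def Zb (m : ℤ) (j : ℕ) : ℤ :=
  if 0 ≤ m then (m.toNat.choose j : ℤ) else (-1) ^ j * ((((j : ℤ) - 1 - m).toNat).choose j : ℤ)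

/-- Signed central binomial coefficient. -/
def cb (r : ℕ) : ℤ := (-1) ^ r * ((2 * r).choose r : ℤ)

/-- The Vandermonde expansion of `4^k * gchoose (m - 1/2) k`. -/
def Sb (m : ℤ) (k : ℕ) : ℤ := ∑ j ∈ Finset.range (k + 1), Zb m j * 4 ^ j * cb (k - j)

noncomputable def Hq (m : ℤ) (k : ℕ) : ℚ := 4 ^ k * gchoose ((m : ℚ) - 1 / 2) k

lemma gchoose_zero (x : ℚ) : gchoose x 0 = 1 := by simp [gchoose]

lemma gchoose_succ (x : ℚ) (k : ℕ) :
    gchoose x (k + 1) = gchoose x k * (x - k) / (k + 1) := by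
  have h1 : (k.factorial : ℚ) ≠ 0 := by exact_mod_cast k.factorial_ne_zero
  have h2 : ((k + 1).factorial : ℚ) = ((k : ℚ) + 1) * k.factorial := by
    rw [Nat.factorial_succ]; push_cast; ring
  have h3 : ((k : ℚ) + 1) ≠ 0 := by positivity
  unfold gchoose
  rw [Finset.prod_range_succ, h2, div_mul_eq_mul_div, div_div,
    mul_comm (k.factorial : ℚ) ((k : ℚ) + 1)]

lemma gchoose_pascal (x : ℚ) (k : ℕ) :
    gchoose x (k + 1) = gchoose (x - 1) k + gchoose (x - 1) (k + 1) := by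
  have hA : ∏ i ∈ Finset.range (k + 1), (x - i)
      = (∏ i ∈ Finset.range k, (x - 1 - i)) * x := by
    rw [Finset.prod_range_succ']
    congr 1
    · exact Finset.prod_congr rfl fun i _ => by push_cast; ring
    · norm_num
  have h1 : (k.factorial : ℚ) ≠ 0 := by exact_mod_cast k.factorial_ne_zero
  have h2 : ((k + 1).factorial : ℚ) = ((k : ℚ) + 1) * k.factorial := by
    rw [Nat.factorial_succ]; push_cast; ring
  have h3 : ((k : ℚ) + 1) ≠ 0 := by positivity
  unfold gchoose
  rw [hA, Finset.prod_range_succ, h2]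
  field_simp
  ring

lemma Hq_zero (m : ℤ) : Hq m 0 = 1 := by simp [Hq, gchoose_zero]

lemma Hq_pascal (m : ℤ) (k : ℕ) :
    Hq m (k + 1) = 4 * Hq (m - 1) k + Hq (m - 1) (k + 1) := by
  have e : ((m : ℚ) - 1 / 2) - 1 = ((m - 1 : ℤ) : ℚ) - 1 / 2 := by push_cast; ring
  unfold Hq
  rw [gchoose_pascal, e, pow_succ]
  ring

lemma Hq_zero_left (k : ℕ) : Hq 0 k = (cb k : ℚ) := by
  induction k with
  | zero => simp [Hq_zero, cb]
  | succ k ih =>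
    have h3 : ((k : ℚ) + 1) ≠ 0 := by positivity
    have key : ((2 * (k + 1)).choose (k + 1) : ℚ) * ((k : ℚ) + 1)
        = 2 * (2 * (k : ℚ) + 1) * ((2 * k).choose k : ℚ) := by
      have h := Nat.succ_mul_centralBinom_succ k
      have h' : (((k + 1) * Nat.centralBinom (k + 1) : ℕ) : ℚ)
          = ((2 * (2 * k + 1) * Nat.centralBinom k : ℕ) : ℚ) := by rw [h]
      simp only [Nat.centralBinom] at h'
      push_cast at h'
      linarith
    have hrhs : (cb (k + 1) : ℚ) * ((k : ℚ) + 1) = (cb k : ℚ) * (-2) * (2 * (k : ℚ) + 1) := by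
      simp only [cb]
      push_cast
      rw [pow_succ]
      linear_combination ((-1 : ℚ) ^ k * (-1)) * key
    have hlhs : Hq 0 (k + 1) * ((k : ℚ) + 1) = (cb k : ℚ) * (-2) * (2 * (k : ℚ) + 1) := by
      unfold Hq at ih ⊢
      simp only [Int.cast_zero] at ih ⊢
      rw [gchoose_succ, pow_succ, mul_assoc, div_mul_cancel₀ _ h3]
      linear_combination (4 * ((0 : ℚ) - 1 / 2 - (k : ℚ))) * ih
    exact mul_right_cancel₀ h3 (hlhs.trans hrhs.symm)

lemma Zb_zero_right (m : ℤ) : Zb m 0 = 1 := by unfold Zb; split <;> simp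

lemma Zb_pascal (m : ℤ) (j : ℕ) : Zb m (j + 1) = Zb (m - 1) (j + 1) + Zb (m - 1) j := by
  unfold Zb
  rcases lt_trichotomy m 0 with h | h | h
  · rw [if_neg (by omega), if_neg (by omega), if_neg (by omega)]
    have e1 : (((j + 1 : ℕ) : ℤ) - 1 - (m - 1)).toNat = ((j : ℤ) - m).toNat + 1 := by omega
    have e2 : (((j + 1 : ℕ) : ℤ) - 1 - m).toNat = ((j : ℤ) - m).toNat := by omega
    have e3 : ((j : ℤ) - 1 - (m - 1)).toNat = ((j : ℤ) - m).toNat := by omega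
    rw [e1, e2, e3, Nat.choose_succ_succ ((j : ℤ) - m).toNat j]
    push_cast
    ring
  · subst h
    rw [if_pos le_rfl, if_neg (by omega), if_neg (by omega)]
    have e1 : (((j + 1 : ℕ) : ℤ) - 1 - (0 - 1)).toNat = j + 1 := by omega
    have e2 : ((j : ℤ) - 1 - (0 - 1)).toNat = j := by omega
    rw [e1, e2]
    simp [Nat.choose_self, pow_succ]
  · rw [if_pos (by omega), if_pos (by omega), if_pos (by omega)]
    have e1 : m.toNat = (m - 1).toNat + 1 := by omega
    rw [e1, Nat.choose_succ_succ]
    push_cast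
    ring

lemma Zb_zero_left (j : ℕ) : Zb 0 (j + 1) = 0 := by
  unfold Zb
  rw [if_pos le_rfl]
  simp

lemma Sb_zero (m : ℤ) : Sb m 0 = 1 := by
  simp [Sb, Zb_zero_right, cb]

lemma Sb_zero_left (k : ℕ) : Sb 0 k = cb k := by
  unfold Sb
  rw [Finset.sum_range_succ' (fun j => Zb 0 j * 4 ^ j * cb (k - j))]
  simp [Zb_zero_left, Zb_zero_right]

lemma Sb_pascal (m : ℤ) (k : ℕ) : Sb m (k + 1) = 4 * Sb (m - 1) k + Sb (m - 1) (k + 1) := by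
  have h1 : Sb m (k + 1)
      = ∑ j ∈ Finset.range (k + 1), Zb m (j + 1) * 4 ^ (j + 1) * cb (k - j)
        + Zb m 0 * 4 ^ 0 * cb (k + 1) := by
    unfold Sb
    rw [Finset.sum_range_succ' (fun j => Zb m j * 4 ^ j * cb (k + 1 - j))]
    simp only [Nat.succ_sub_succ, Nat.sub_zero]
  have h2 : Sb (m - 1) (k + 1)
      = ∑ j ∈ Finset.range (k + 1), Zb (m - 1) (j + 1) * 4 ^ (j + 1) * cb (k - j)
        + Zb (m - 1) 0 * 4 ^ 0 * cb (k + 1) := by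
    unfold Sb
    rw [Finset.sum_range_succ' (fun j => Zb (m - 1) j * 4 ^ j * cb (k + 1 - j))]
    simp only [Nat.succ_sub_succ, Nat.sub_zero]
  have h3 : ∀ j, Zb m (j + 1) * 4 ^ (j + 1) * cb (k - j)
      = Zb (m - 1) (j + 1) * 4 ^ (j + 1) * cb (k - j)
        + 4 * (Zb (m - 1) j * 4 ^ j * cb (k - j)) := by
    intro j
    rw [Zb_pascal, pow_succ]
    ring
  rw [h1, h2, Finset.sum_congr rfl (fun j _ => h3 j), Finset.sum_add_distrib,
    ← Finset.mul_sum, Zb_zero_right, Zb_zero_right]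
  unfold Sb
  ring

lemma Hq_eq_Sb (m : ℤ) (k : ℕ) : Hq m k = (Sb m k : ℚ) := by
  have pos : ∀ t : ℕ, ∀ k, Hq (t : ℤ) k = ((Sb (t : ℤ) k : ℤ) : ℚ) := by
    intro t
    induction t with
    | zero =>
      intro k
      rw [Nat.cast_zero, Hq_zero_left, Sb_zero_left]
    | succ t ih =>
      intro k
      cases k with
      | zero => rw [Hq_zero, Sb_zero]; norm_num
      | succ k =>
        have e : ((t + 1 : ℕ) : ℤ) - 1 = (t : ℤ) := by push_cast; ring
        rw [Hq_pascal, Sb_pascal, e, ih, ih]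
        push_cast
        ring
  have neg : ∀ t : ℕ, ∀ k, Hq (-(t : ℤ)) k = ((Sb (-(t : ℤ)) k : ℤ) : ℚ) := by
    intro t
    induction t with
    | zero => intro k; simpa using pos 0 k
    | succ t ih =>
      intro k
      induction k with
      | zero => rw [Hq_zero, Sb_zero]; norm_num
      | succ k ihk =>
        have e : (-(t : ℤ)) - 1 = -((t + 1 : ℕ) : ℤ) := by push_cast; ring
        have hH := Hq_pascal (-(t : ℤ)) k
        have hS := Sb_pascal (-(t : ℤ)) k
        rw [e] at hH hS
        have h0 := ih (k + 1)
        rw [hH, hS] at h0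
        rw [ihk] at h0
        push_cast at h0 ⊢
        linarith
  rcases le_or_gt 0 m with h | h
  · obtain ⟨t, rfl⟩ := Int.eq_ofNat_of_zero_le h
    exact pos t k
  · obtain ⟨t, rfl⟩ := Int.exists_eq_neg_ofNat h.le
    exact neg t k

lemma three_dvd_choose {a b : ℕ} (h : a % 3 < b % 3) : (3 : ℕ) ∣ a.choose b := by
  have : Fact (Nat.Prime 3) := ⟨by norm_num⟩
  have H := Choose.choose_modEq_choose_mod_mul_choose_div_nat (p := 3) (n := a) (k := b)
  rw [Nat.choose_eq_zero_of_lt h, zero_mul] at H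
  exact Nat.modEq_zero_iff_dvd.mp H

lemma three_dvd_cb {r : ℕ} (h : r % 3 = 2) : (3 : ℤ) ∣ cb r := by
  have h1 : (2 * r) % 3 < r % 3 := by omega
  have h2 : (3 : ℕ) ∣ (2 * r).choose r := three_dvd_choose h1
  exact Dvd.dvd.mul_left (by exact_mod_cast h2) _

lemma three_dvd_Zb {m : ℤ} {j : ℕ} (hm : m % 3 = 0) (hj : j % 3 ≠ 0) : (3 : ℤ) ∣ Zb m j := by
  unfold Zb
  split_ifs with h
  · have : m.toNat % 3 < j % 3 := by omega
    exact_mod_cast three_dvd_choose this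
  · have : ((j : ℤ) - 1 - m).toNat % 3 < j % 3 := by omega
    exact Dvd.dvd.mul_left (by exact_mod_cast three_dvd_choose this) _

/-- If `n ≡ 2 (mod 3)`, `k ≡ 2 (mod 3)`, `k > 0`, then `4^k binom(n+k-3/2, k)`
is an integer divisible by `3`. -/
theorem lucas_variant_two (n : ℤ) (k : ℕ) (hn : n % 3 = 2) (hk3 : (k : ℤ) % 3 = 2)
    (hk : 0 < k) :
    ∃ m : ℤ, (4 : ℚ) ^ k * gchoose ((n : ℚ) + (k : ℚ) - 3 / 2) k = (m : ℚ)
      ∧ (3 : ℤ) ∣ m := by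
  refine ⟨Sb (n + k - 1) k, ?_, ?_⟩
  · have e : (n : ℚ) + (k : ℚ) - 3 / 2 = ((n + (k : ℤ) - 1 : ℤ) : ℚ) - 1 / 2 := by
      push_cast; ring
    rw [e, ← Hq, Hq_eq_Sb]
  · apply Finset.dvd_sum
    intro j hj
    rw [Finset.mem_range] at hj
    by_cases h3j : j % 3 = 0
    · have hkj : (k - j) % 3 = 2 := by omega
      exact Dvd.dvd.mul_left (three_dvd_cb hkj) _
    · have hm : (n + (k : ℤ) - 1) % 3 = 0 := by omega
      exact Dvd.dvd.mul_right (Dvd.dvd.mul_right (three_dvd_Zb hm h3j) _) _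
end

section
/- Let p be a prime, q an integer with gcd(q,p)=1, n an integer, and k a positive integer. Then p^{2k} binom(n + q/p, k) is an integer divisible by p. -/
lemma my_factorial_dvd_prod_sub (a : ℤ) (k : ℕ) :
    (k.factorial : ℤ) ∣ ∏ i ∈ Finset.range k, (a - i) := by
  have h : ∏ i ∈ Finset.range k, (a - i) = (descPochhammer ℤ k).eval a := by
    induction k with
    | zero => simp
    | succ m ih => rw [Finset.prod_range_succ, ih, descPochhammer_succ_eval]
  rw [h, Polynomial.eval_eq_smeval, Ring.descPochhammer_eq_factorial_smul_choose]
  rw [nsmul_eq_mul]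
  exact Dvd.intro _ rfl

lemma my_dvd_prod_sub_prod {d : ℤ} (s : Finset ℕ) (f g : ℕ → ℤ)
    (h : ∀ i ∈ s, d ∣ f i - g i) :
    d ∣ (∏ i ∈ s, f i) - ∏ i ∈ s, g i := by
  classical
  induction s using Finset.induction_on with
  | empty => simp
  | insert _ _ ha ih =>
    rename_i a s
    rw [Finset.prod_insert ha, Finset.prod_insert ha]
    have h1 : d ∣ f a - g a := h a (Finset.mem_insert_self a s)
    have h2 : d ∣ (∏ i ∈ s, f i) - ∏ i ∈ s, g i :=
      ih fun i hi => h i (Finset.mem_insert_of_mem hi)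
    have : f a * ∏ i ∈ s, f i - g a * ∏ i ∈ s, g i
        = f a * ((∏ i ∈ s, f i) - ∏ i ∈ s, g i) + (f a - g a) * ∏ i ∈ s, g i := by ring
    rw [this]
    exact dvd_add (Dvd.dvd.mul_left h2 _) (Dvd.dvd.mul_right h1 _)

/-- If `p` is prime, `gcd(q,p)=1`, `k > 0`, then `p^{2k} binom(n + q/p, k)`
is an integer divisible by `p`. -/
theorem lucas_variant_three (p q n : ℤ) (hp : Prime p) (hqp : Int.gcd q p = 1)
    (k : ℕ) (hk : 0 < k) :
    ∃ m : ℤ, (p : ℚ) ^ (2 * k) * gchoose ((n : ℚ) + (q : ℚ) / (p : ℚ)) k = (m : ℚ)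
      ∧ p ∣ m := by
  have hp0 : p ≠ 0 := hp.ne_zero
  have hpQ : (p : ℚ) ≠ 0 := Int.cast_ne_zero.mpr hp0
  set P := p.natAbs with hPdef
  have hP : P.Prime := Int.prime_iff_natAbs_prime.mp hp
  haveI : Fact P.Prime := ⟨hP⟩
  set N : ℤ := ∏ i ∈ Finset.range k, (p * (n - i) + q) with hNdef
  -- Step A: the rational identity
  have hprod : ∏ i ∈ Finset.range k, ((n : ℚ) + (q : ℚ) / (p : ℚ) - i)
      = (N : ℚ) / (p : ℚ) ^ k := by
    rw [hNdef]
    push_cast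
    rw [show (∏ i ∈ Finset.range k, ((n : ℚ) + (q : ℚ) / (p : ℚ) - i))
        = ∏ i ∈ Finset.range k, (((p : ℚ) * ((n : ℚ) - i) + q) / (p : ℚ)) from
      Finset.prod_congr rfl (fun i _ => by field_simp; ring),
      Finset.prod_div_distrib, Finset.prod_const, Finset.card_range]
  -- key divisibility
  set v := padicValNat P k.factorial with hvdef
  have hv : P ^ v ∣ k.factorial := pow_padicValNat_dvd
  set M := k.factorial / P ^ v with hMdef
  have hfac : k.factorial = P ^ v * M := (Nat.div_mul_cancel hv).symm.trans (mul_comm _ _)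
  have hPM : ¬ P ∣ M := by
    intro hdvd
    have : P ^ (v + 1) ∣ k.factorial := by
      rw [hfac, pow_succ]
      exact mul_dvd_mul dvd_rfl hdvd
    exact pow_succ_padicValNat_not_dvd (Nat.factorial_ne_zero k) this
  -- v < k
  have hvk : v < k := by
    by_contra hcon
    push_neg at hcon
    have hleg := sub_one_mul_padicValNat_factorial (p := P) k
    have hs : 1 ≤ (P.digits k).sum := by
      rcases Nat.eq_zero_or_pos (P.digits k).sum with h0 | h1
      · exfalso
        have hne : P.digits k ≠ [] := Nat.digits_ne_nil_iff_ne_zero.mpr hk.ne'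
        have hlast := Nat.getLast_digit_ne_zero P hk.ne'
        have hmem := List.getLast_mem hne
        exact hlast (List.sum_eq_zero_iff.mp h0 _ hmem)
      · exact h1
    have h2 : 2 ≤ P := hP.two_le
    have h3 : (P - 1) * v ≤ k - 1 := by rw [hleg]; omega
    have h4 : v ≤ (P - 1) * v := Nat.le_mul_of_pos_left v (by omega)
    omega
  -- coprimality facts
  have hcopPM : Nat.Coprime P M := (Nat.Prime.coprime_iff_not_dvd hP).mpr hPM
  have hgcdpM : IsCoprime (p : ℤ) (M : ℤ) := by
    rw [Int.isCoprime_iff_gcd_eq_one]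
    have : Int.gcd p (M : ℤ) = Nat.gcd P M := by
      simp [Int.gcd, hPdef]
    rw [this]
    exact hcopPM
  obtain ⟨u, w, huw⟩ := hgcdpM
  -- M ∣ N
  have hMup : (M : ℤ) ∣ u * p - 1 := ⟨-w, by linarith⟩
  have hMdvd1 : (M : ℤ) ∣ u ^ k * N - ∏ i ∈ Finset.range k, ((n + u * q) - i) := by
    have hrw : u ^ k * N = ∏ i ∈ Finset.range k, (u * (p * (n - i) + q)) := by
      rw [Finset.prod_mul_distrib, Finset.prod_const, Finset.card_range, hNdef]
    rw [hrw]
    apply my_dvd_prod_sub_prod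
    intro i _
    have : u * (p * (n - i) + q) - ((n + u * q) - i) = (u * p - 1) * (n - i) := by ring
    rw [this]
    exact hMup.mul_right _
  have hMdvd2 : (M : ℤ) ∣ ∏ i ∈ Finset.range k, ((n + u * q) - i) := by
    refine dvd_trans ?_ (my_factorial_dvd_prod_sub (n + u * q) k)
    exact_mod_cast Int.natCast_dvd_natCast.mpr ⟨P ^ v, by rw [hfac]; ring⟩
  have hMdvdN : (M : ℤ) ∣ N := by
    have hMuN : (M : ℤ) ∣ u ^ k * N := by
      have := dvd_add hMdvd1 hMdvd2
      simpa using this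
    have hcopuM : IsCoprime (M : ℤ) u := ⟨w, p, by linarith⟩
    exact (hcopuM.pow_right).dvd_of_dvd_mul_left hMuN
  -- P^v ∣ p^(k-1)
  have hPdvd : ((P : ℤ)) ^ v ∣ p ^ (k - 1) := by
    have h1 : ((P : ℤ)) ^ v ∣ (P : ℤ) ^ (k - 1) := pow_dvd_pow _ (by omega)
    have h2 : (P : ℤ) ∣ p := Int.natAbs_dvd.mpr dvd_rfl
    exact h1.trans (pow_dvd_pow_of_dvd h2 _)
  -- combine
  have hcopQ : IsCoprime ((P : ℤ) ^ v) (M : ℤ) := by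
    exact (Nat.isCoprime_iff_coprime.mpr hcopPM).pow_left
  have hdvd : (k.factorial : ℤ) ∣ p ^ (k - 1) * N := by
    have : (k.factorial : ℤ) = (P : ℤ) ^ v * (M : ℤ) := by exact_mod_cast congrArg (Nat.cast : ℕ → ℤ) hfac
    rw [this]
    exact hcopQ.mul_dvd (hPdvd.mul_right _) (hMdvdN.mul_left _)
  obtain ⟨c, hc⟩ := hdvd
  refine ⟨p * c, ?_, Dvd.intro _ rfl⟩
  -- final computation
  have hfacQ : (k.factorial : ℚ) ≠ 0 := by exact_mod_cast Nat.factorial_ne_zero k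
  rw [gchoose, hprod]
  have hpk : (p : ℚ) ^ (2 * k) = (p : ℚ) ^ k * ((p :ℚ) * (p : ℚ) ^ (k - 1)) := by
    rw [← pow_succ']
    rw [← pow_add]
    congr 1
    omega
  rw [hpk]
  have hcQ : ((p : ℚ) ^ (k-1)) * (N : ℚ) = (k.factorial : ℚ) * (c : ℚ) := by
    exact_mod_cast congrArg (Int.cast : ℤ → ℚ) hc
  field_simp
  push_cast
  linear_combination (p : ℚ) * hcQ
end

section
/- The binomial identity binom(n+a+q/p-1, a) binom(n+k+a+q/p-1, k) binom(n+a, k+a) = binom(n+k+a+q/p-1, k+a) binom(n, k) binom(n+a, a) holds for all nonnegative integers a, n, k with k ≤ n and rational q/p. -/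
/-- The key binomial identity behind `NL = MK`. -/
theorem catbert_binomial_identity (a n k : ℕ) (hk : k ≤ n) (r : ℚ) :
    gchoose ((n : ℚ) + (a : ℚ) + r - 1) a
        * gchoose ((n : ℚ) + (k : ℚ) + (a : ℚ) + r - 1) k
        * gchoose ((n : ℚ) + (a : ℚ)) (k + a)
      = gchoose ((n : ℚ) + (k : ℚ) + (a : ℚ) + r - 1) (k + a)
        * gchoose ((n : ℚ)) k
        * gchoose ((n : ℚ) + (a : ℚ)) a := by
  unfold gchoose
  rw [div_mul_div_comm, div_mul_div_comm, div_mul_div_comm, div_mul_div_comm]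
  have h1 : ∏ i ∈ Finset.range (k + a), ((n : ℚ) + k + a + r - 1 - i)
      = (∏ i ∈ Finset.range k, ((n : ℚ) + k + a + r - 1 - i))
        * ∏ i ∈ Finset.range a, ((n : ℚ) + a + r - 1 - i) := by
    rw [Finset.prod_range_add]
    congr 1
    apply Finset.prod_congr rfl
    intro i _
    push_cast
    ring
  have h2 : ∏ i ∈ Finset.range (k + a), ((n : ℚ) + a - i)
      = (∏ i ∈ Finset.range a, ((n : ℚ) + a - i))
        * ∏ i ∈ Finset.range k, ((n : ℚ) - i) := by
    rw [add_comm k a, Finset.prod_range_add]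
    congr 1
    apply Finset.prod_congr rfl
    intro i _
    push_cast
    ring
  congr 1
  · rw [h1, h2]; ring
  · ring
end
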